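/- arXiv:2509.04349 — 3 statements merged into one kernel-verified Lean document; each statement's English description precedes it below -/
import Mathlib

section
/- K_{1,w} ≥ √(1 − 1/(3w)) for every w ≥ 1, where K_{u,w} is the supremum of (∫_ℝ conj(Λ_u(x)) Λ_w(x) dx)^{1/2} over continuous positive definite Λ_u ∈ F_u, Λ_w ∈ F_w with Λ_u(0) = Λ_w(0) = 1. -/
open Complex MeasureTheory

/-- A function `Λ : ℝ → ℂ` is positive definite if for every finite collection of points
`x₁,…,x_t` and complex numbers `ξ₁,…,ξ_t`, the sum `∑_{j,k} Λ(x_j - x_k) ξ_j conj(ξ_k)`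
is a nonnegative real number. -/
def IsPosDefFn (Λ : ℝ → ℂ) : Prop :=
  ∀ (t : ℕ) (x : Fin t → ℝ) (ξ : Fin t → ℂ),
    0 ≤ (∑ j, ∑ k, Λ (x j - x k) * ξ j * (starRingEnd ℂ) (ξ k)).re ∧
    (∑ j, ∑ k, Λ (x j - x k) * ξ j * (starRingEnd ℂ) (ξ k)).im = 0

/-- The class `F_c` of continuous positive definite functions supported on `[-c, c]`
and normalized so that `Λ(0) = 1`. -/
def MemFclass (c : ℝ) (Λ : ℝ → ℂ) : Prop :=
  Continuous Λ ∧ IsPosDefFn Λ ∧ (∀ x : ℝ, x ∉ Set.Icc (-c) c → Λ x = 0) ∧ Λ 0 = 1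

/-- The constant `K_{u,w}`: the supremum of `(∫ conj(Λ_u(x)) Λ_w(x) dx)^{1/2}` over
`Λ_u ∈ F_u` and `Λ_w ∈ F_w`. -/
noncomputable def Kconst (u w : ℝ) : ℝ :=
  sSup {r : ℝ | ∃ Λ₁ Λ₂ : ℝ → ℂ, MemFclass u Λ₁ ∧ MemFclass w Λ₂ ∧
    r = Real.sqrt (∫ x : ℝ, ((starRingEnd ℂ) (Λ₁ x) * Λ₂ x).re)}

noncomputable def triFn (w : ℝ) (x : ℝ) : ℂ := ((max (1 - |x| / w) 0 : ℝ) : ℂ)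

lemma triFn_cont (w : ℝ) : Continuous (triFn w) :=
  Complex.continuous_ofReal.comp
    ((continuous_const.sub (_root_.continuous_abs.div_const w)).max continuous_const)

lemma triFn_zero (w : ℝ) : triFn w 0 = 1 := by
  simp [triFn]

lemma triFn_support (w : ℝ) (hw : 0 < w) : ∀ x : ℝ, x ∉ Set.Icc (-w) w → triFn w x = 0 := by
  intro x hx
  have hxw : w < |x| := by
    simp only [Set.mem_Icc, not_and_or, not_le] at hx
    rcases hx with h1 | h1
    · have hx2 : w < -x := by linarith
      exact hx2.trans_le (neg_le_abs x)
    · exact lt_of_lt_of_le h1 (le_abs_self x)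
  have : 1 - |x| / w < 0 := by
    have : 1 < |x| / w := (one_lt_div hw).2 hxw
    linarith
  simp only [triFn, max_eq_right this.le, Complex.ofReal_zero]

lemma indic_prod_eq (w : ℝ) (a b : ℝ) :
    (fun s => (Set.Ioc a (a + w)).indicator (1 : ℝ → ℝ) s *
      (Set.Ioc b (b + w)).indicator (1 : ℝ → ℝ) s)
      = (Set.Ioc a (a + w) ∩ Set.Ioc b (b + w)).indicator (1 : ℝ → ℝ) :=
  funext fun s => by rw [Set.inter_indicator_one]; rfl

lemma indic_prod_integrable (w : ℝ) (a b : ℝ) :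
    Integrable (fun s => (Set.Ioc a (a + w)).indicator (1 : ℝ → ℝ) s *
      (Set.Ioc b (b + w)).indicator (1 : ℝ → ℝ) s) := by
  rw [indic_prod_eq]
  apply (integrableOn_const ?_).integrable_indicator
    (measurableSet_Ioc.inter measurableSet_Ioc)
  exact ne_of_lt <| lt_of_le_of_lt (measure_mono Set.inter_subset_left) (by simp [Real.volume_Ioc])

lemma indic_prod_integral (w : ℝ) (hw : 0 < w) (a b : ℝ) :
    (∫ s, (Set.Ioc a (a + w)).indicator (1 : ℝ → ℝ) s *
      (Set.Ioc b (b + w)).indicator (1 : ℝ → ℝ) s) = w * max (1 - |a - b| / w) 0 := by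
  rw [indic_prod_eq, integral_indicator (measurableSet_Ioc.inter measurableSet_Ioc),
    Set.Ioc_inter_Ioc]
  simp only [Pi.one_def, setIntegral_const, smul_eq_mul, mul_one, Real.volume_Ioc]
  rw [Real.volume_real_Ioc]
  have h1 : min (a + w) (b + w) - max a b = w - |a - b| := by
    rcases le_total a b with h | h
    · rw [max_eq_right h, min_eq_left (by linarith), _root_.abs_of_nonpos (by linarith)]; ring
    · rw [max_eq_left h, min_eq_right (by linarith), _root_.abs_of_nonneg (by linarith)]; ring
  rw [h1]
  rcases le_total (|a - b|) w with h | h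
  · have h2 : 0 ≤ 1 - |a - b| / w := by
      have : |a - b| / w ≤ 1 := (div_le_one hw).2 h
      linarith
    rw [max_eq_left (by linarith), max_eq_left h2]
    field_simp
  · have h2 : 1 - |a - b| / w ≤ 0 := by
      have : 1 ≤ |a - b| / w := (one_le_div hw).2 h
      linarith
    rw [max_eq_right (by linarith), max_eq_right h2, mul_zero]

lemma triFn_posdef (w : ℝ) (hw : 0 < w) : IsPosDefFn (triFn w) := by
  intro t x ξ
  set g : ℝ → ℝ → ℝ := fun a s => (Set.Ioc a (a + w)).indicator (1 : ℝ → ℝ) s with hg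
  set F : ℝ → ℂ := fun s => ∑ j, ξ j * ((g (x j) s : ℝ) : ℂ) with hF
  have expand : ∀ s, F s * (starRingEnd ℂ) (F s)
      = ∑ j, ∑ k, (ξ j * (starRingEnd ℂ) (ξ k)) * ((g (x j) s * g (x k) s : ℝ) : ℂ) := by
    intro s
    rw [hF, map_sum, Finset.sum_mul_sum]
    refine Finset.sum_congr rfl fun j _ => Finset.sum_congr rfl fun k _ => ?_
    simp only [map_mul, Complex.conj_ofReal]
    push_cast
    ring
  have hterm_int : ∀ j k : Fin t, Integrable (fun s =>
      (ξ j * (starRingEnd ℂ) (ξ k)) * ((g (x j) s * g (x k) s : ℝ) : ℂ)) := fun j k =>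
    ((indic_prod_integrable w (x j) (x k)).ofReal (𝕜 := ℂ)).const_mul _
  have hsum : (∑ j, ∑ k, triFn w (x j - x k) * ξ j * (starRingEnd ℂ) (ξ k))
      = (w : ℂ)⁻¹ * ∫ s, F s * (starRingEnd ℂ) (F s) := by
    rw [show (fun s => F s * (starRingEnd ℂ) (F s)) = fun s =>
      ∑ j, ∑ k, (ξ j * (starRingEnd ℂ) (ξ k)) * ((g (x j) s * g (x k) s : ℝ) : ℂ)
      from funext expand]
    rw [integral_finset_sum _ (fun j _ => integrable_finset_sum _ (fun k _ => hterm_int j k))]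
    rw [Finset.mul_sum]
    refine Finset.sum_congr rfl fun j _ => ?_
    rw [integral_finset_sum _ (fun k _ => hterm_int j k), Finset.mul_sum]
    refine Finset.sum_congr rfl fun k _ => ?_
    have hio : (∫ a, ((g (x j) a * g (x k) a : ℝ) : ℂ))
        = ((∫ a, g (x j) a * g (x k) a : ℝ) : ℂ) := integral_ofReal
    rw [integral_const_mul, hio, indic_prod_integral w hw (x j) (x k)]
    rw [triFn]
    have hw' : (w : ℂ) ≠ 0 := by exact_mod_cast hw.ne'
    push_cast
    field_simp
  have hreal : (∫ s, F s * (starRingEnd ℂ) (F s)) = ((∫ s, Complex.normSq (F s) : ℝ) : ℂ) := by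
    rw [show (fun s => F s * (starRingEnd ℂ) (F s)) = fun s => ((Complex.normSq (F s) : ℝ) : ℂ)
      from funext fun s => Complex.mul_conj (F s)]
    exact integral_ofReal
  have hnn : 0 ≤ ∫ s, Complex.normSq (F s) :=
    integral_nonneg fun s => Complex.normSq_nonneg _
  rw [hsum, hreal]
  constructor
  · simp only [Complex.mul_re, Complex.inv_re, Complex.ofReal_re, Complex.ofReal_im,
      Complex.inv_im, Complex.normSq_ofReal, mul_zero, sub_zero]
    positivity
  · simp [Complex.mul_im]



lemma posdef_abs_le_one (Λ : ℝ → ℂ) (hpd : IsPosDefFn Λ) (h0 : Λ 0 = 1) (x : ℝ) :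
    ‖Λ x‖ ≤ 1 := by
  have key : ∀ c : ℂ, 0 ≤ (1 + c * (starRingEnd ℂ) c + Λ x * c
        + Λ (-x) * (starRingEnd ℂ) c).re ∧
      (1 + c * (starRingEnd ℂ) c + Λ x * c + Λ (-x) * (starRingEnd ℂ) c).im = 0 := by
    intro c
    have h := hpd 2 ![x, 0] ![c, 1]
    have hE : (∑ j, ∑ k, Λ (![x, 0] j - ![x, 0] k) * ![c, 1] j * (starRingEnd ℂ) (![c, 1] k))
        = 1 + c * (starRingEnd ℂ) c + Λ x * c + Λ (-x) * (starRingEnd ℂ) c := by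
      simp only [Fin.sum_univ_two, Matrix.cons_val_zero, Matrix.cons_val_one, Matrix.head_cons,
        sub_self, sub_zero, zero_sub, h0, one_mul, mul_one, map_one]
      ring
    rw [hE] at h
    exact h
  have h1 := (key 1).2
  have h2 := (key Complex.I).2
  simp only [map_one, mul_one, one_mul, Complex.add_im, Complex.one_im, Complex.mul_im,
    Complex.one_re, Complex.conj_I, Complex.I_re, Complex.I_im, mul_zero, mul_neg,
    Complex.neg_im, Complex.neg_re, zero_add, add_zero, zero_mul, sub_zero, zero_sub] at h1 h2
  have hc : Λ (-x) = (starRingEnd ℂ) (Λ x) := by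
    apply Complex.ext
    · simp only [Complex.conj_re]; linarith
    · simp only [Complex.conj_im]; linarith
  set r := ‖Λ x‖ with hr
  have habs : Λ x * (starRingEnd ℂ) (Λ x) = ((r : ℂ)) ^ 2 := by
    rw [Complex.mul_conj, Complex.normSq_eq_norm_sq]
    push_cast
    ring
  have e2 : 1 + (-(starRingEnd ℂ) (Λ x)) * (starRingEnd ℂ) (-(starRingEnd ℂ) (Λ x))
      + Λ x * (-(starRingEnd ℂ) (Λ x))
      + Λ (-x) * (starRingEnd ℂ) (-(starRingEnd ℂ) (Λ x)) = ((1 - r ^ 2 : ℝ) : ℂ) := by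
    rw [hc]
    simp only [map_neg, Complex.conj_conj]
    push_cast
    linear_combination -habs
  have h3 := (key (-(starRingEnd ℂ) (Λ x))).1
  rw [e2] at h3
  simp only [Complex.ofReal_re] at h3
  nlinarith [norm_nonneg (Λ x)]

lemma memF_abs_le_one {c : ℝ} {Λ : ℝ → ℂ} (h : MemFclass c Λ) (x : ℝ) :
    ‖Λ x‖ ≤ 1 :=
  posdef_abs_le_one Λ h.2.1 h.2.2.2 x

lemma Kconst_bddAbove (w : ℝ) :
    BddAbove {r : ℝ | ∃ Λ₁ Λ₂ : ℝ → ℂ, MemFclass 1 Λ₁ ∧ MemFclass w Λ₂ ∧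
      r = Real.sqrt (∫ x : ℝ, ((starRingEnd ℂ) (Λ₁ x) * Λ₂ x).re)} := by
  refine ⟨Real.sqrt 2, ?_⟩
  rintro r ⟨Λ₁, Λ₂, h1, h2, rfl⟩
  apply Real.sqrt_le_sqrt
  set f : ℝ → ℝ := fun x => ((starRingEnd ℂ) (Λ₁ x) * Λ₂ x).re with hfdef
  have hbound : ∀ x : ℝ, |f x| ≤ (Set.Icc (-1 : ℝ) 1).indicator (fun _ => (1 : ℝ)) x := by
    intro x
    by_cases hx : x ∈ Set.Icc (-1 : ℝ) 1
    · rw [Set.indicator_of_mem hx]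
      calc |f x| ≤ ‖(starRingEnd ℂ) (Λ₁ x) * Λ₂ x‖ := Complex.abs_re_le_norm _
        _ = ‖Λ₁ x‖ * ‖Λ₂ x‖ := by
            rw [norm_mul, Complex.norm_conj]
        _ ≤ 1 := mul_le_one₀ (memF_abs_le_one h1 x) (norm_nonneg _)
            (memF_abs_le_one h2 x)
    · rw [Set.indicator_of_notMem hx, hfdef]
      simp [h1.2.2.1 x hx]
  have hind : Integrable ((Set.Icc (-1 : ℝ) 1).indicator (fun _ => (1 : ℝ))) := by
    apply (integrableOn_const ?_).integrable_indicator measurableSet_Icc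
    simp [Real.volume_Icc]
  have hindint : (∫ x, (Set.Icc (-1 : ℝ) 1).indicator (fun _ => (1 : ℝ)) x) = 2 := by
    rw [integral_indicator measurableSet_Icc]
    simp [Real.volume_Icc]
    norm_num
  by_cases hf : Integrable f
  · calc ∫ x, f x ≤ |∫ x, f x| := le_abs_self _
      _ ≤ ∫ x, |f x| := by
          simpa using MeasureTheory.norm_integral_le_integral_norm f
      _ ≤ ∫ x, (Set.Icc (-1 : ℝ) 1).indicator (fun _ => (1 : ℝ)) x :=
          integral_mono hf.abs hind hbound
      _ = 2 := hindint
  · rw [integral_undef hf]; norm_num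

lemma tri_integral (w : ℝ) (hw : 1 ≤ w) :
    (∫ x : ℝ, ((starRingEnd ℂ) (triFn 1 x) * triFn w x).re) = 1 - 1 / (3 * w) := by
  have hw0 : (0 : ℝ) < w := lt_of_lt_of_le one_pos hw
  have hwne : w ≠ 0 := hw0.ne'
  have hf : (fun x : ℝ => ((starRingEnd ℂ) (triFn 1 x) * triFn w x).re)
      = fun x => max (1 - |x|) 0 * max (1 - |x| / w) 0 := by
    funext x
    rw [triFn, triFn, Complex.conj_ofReal, ← Complex.ofReal_mul, Complex.ofReal_re]
    norm_num
  rw [hf]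
  have hsupp : (fun x : ℝ => max (1 - |x|) 0 * max (1 - |x| / w) 0)
      = (Set.Icc (-1 : ℝ) 1).indicator (fun x => max (1 - |x|) 0 * max (1 - |x| / w) 0) := by
    funext x
    by_cases hx : x ∈ Set.Icc (-1 : ℝ) 1
    · rw [Set.indicator_of_mem hx]
    · rw [Set.indicator_of_notMem hx]
      have h1 : 1 < |x| := by
        simp only [Set.mem_Icc, not_and_or, not_le] at hx
        rcases hx with h | h
        · have : 1 < -x := by linarith
          exact this.trans_le (neg_le_abs x)
        · exact h.trans_le (le_abs_self x)
      rw [max_eq_right (by linarith), zero_mul]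
  rw [hsupp, integral_indicator measurableSet_Icc, integral_Icc_eq_integral_Ioc,
    ← intervalIntegral.integral_of_le (by norm_num : (-1 : ℝ) ≤ 1)]
  have hcong : ∫ x in (-1 : ℝ)..1, max (1 - |x|) 0 * max (1 - |x| / w) 0
      = ∫ x in (-1 : ℝ)..1, (1 - |x|) * (1 - |x| / w) := by
    apply intervalIntegral.integral_congr
    intro x hx
    dsimp only
    rw [Set.uIcc_of_le (by norm_num : (-1 : ℝ) ≤ 1)] at hx
    have habs : |x| ≤ 1 := abs_le.2 ⟨hx.1, hx.2⟩
    have h2 : |x| / w ≤ 1 := (div_le_one hw0).2 (habs.trans hw)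
    rw [max_eq_left (by linarith), max_eq_left (by linarith)]
  rw [hcong]
  have hcont : Continuous fun x : ℝ => (1 - |x|) * (1 - |x| / w) :=
    (continuous_const.sub _root_.continuous_abs).mul
      (continuous_const.sub (_root_.continuous_abs.div_const w))
  have hsplit := intervalIntegral.integral_add_adjacent_intervals
    (a := (-1 : ℝ)) (b := 0) (c := 1) (μ := volume)
    (hcont.intervalIntegrable _ _) (hcont.intervalIntegrable _ _)
  rw [← hsplit]
  have hpart1 : ∫ x in (-1 : ℝ)..0, (1 - |x|) * (1 - |x| / w)
      = ∫ x in (-1 : ℝ)..0, (1 + x) * (1 + x / w) := by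
    apply intervalIntegral.integral_congr
    intro x hx
    dsimp only
    rw [Set.uIcc_of_le (by norm_num : (-1 : ℝ) ≤ 0)] at hx
    rw [_root_.abs_of_nonpos hx.2]
    ring
  have hpart2 : ∫ x in (0 : ℝ)..1, (1 - |x|) * (1 - |x| / w)
      = ∫ x in (0 : ℝ)..1, (1 - x) * (1 - x / w) := by
    apply intervalIntegral.integral_congr
    intro x hx
    dsimp only
    rw [Set.uIcc_of_le (by norm_num : (0 : ℝ) ≤ 1)] at hx
    rw [_root_.abs_of_nonneg hx.1]
  have hd1 : ∀ x : ℝ, HasDerivAt (fun x : ℝ => x + (1 / 2 + 1 / (2 * w)) * x ^ 2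
      + x ^ 3 / (3 * w)) ((1 + x) * (1 + x / w)) x := by
    intro x
    have h := ((hasDerivAt_id x).add
      ((hasDerivAt_pow 2 x).const_mul (1 / 2 + 1 / (2 * w)))).add
      ((hasDerivAt_pow 3 x).div_const (3 * w))
    refine h.congr_deriv ?_
    field_simp
    ring
  have hd2 : ∀ x : ℝ, HasDerivAt (fun x : ℝ => x - (1 / 2 + 1 / (2 * w)) * x ^ 2
      + x ^ 3 / (3 * w)) ((1 - x) * (1 - x / w)) x := by
    intro x
    have h := ((hasDerivAt_id x).sub
      ((hasDerivAt_pow 2 x).const_mul (1 / 2 + 1 / (2 * w)))).add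
      ((hasDerivAt_pow 3 x).div_const (3 * w))
    refine h.congr_deriv ?_
    field_simp
    ring
  have hcont1 : Continuous fun x : ℝ => (1 + x) * (1 + x / w) :=
    (continuous_const.add continuous_id).mul
      (continuous_const.add (continuous_id.div_const w))
  have hcont2 : Continuous fun x : ℝ => (1 - x) * (1 - x / w) :=
    (continuous_const.sub continuous_id).mul
      (continuous_const.sub (continuous_id.div_const w))
  have hv1 : ∫ x in (-1 : ℝ)..0, (1 + x) * (1 + x / w)
      = 1 / 2 - 1 / (2 * w) + 1 / (3 * w) := by
    rw [intervalIntegral.integral_eq_sub_of_hasDerivAt (fun x _ => hd1 x)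
      (hcont1.intervalIntegrable _ _)]
    field_simp
    ring
  have hv2 : ∫ x in (0 : ℝ)..1, (1 - x) * (1 - x / w)
      = 1 / 2 - 1 / (2 * w) + 1 / (3 * w) := by
    rw [intervalIntegral.integral_eq_sub_of_hasDerivAt (fun x _ => hd2 x)
      (hcont2.intervalIntegrable _ _)]
    field_simp
    ring
  rw [hpart1, hpart2, hv1, hv2]
  field_simp
  ring

theorem Kconst_one_lower_bound (w : ℝ) (hw : 1 ≤ w) :
    Kconst 1 w ≥ Real.sqrt (1 - 1 / (3 * w)) := by
  have hw0 : (0 : ℝ) < w := lt_of_lt_of_le one_pos hw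
  refine le_csSup (Kconst_bddAbove w) ?_
  refine ⟨triFn 1, triFn w, ?_, ?_, ?_⟩
  · exact ⟨triFn_cont 1, triFn_posdef 1 one_pos, triFn_support 1 one_pos, triFn_zero 1⟩
  · exact ⟨triFn_cont w, triFn_posdef w hw0, triFn_support w hw0, triFn_zero w⟩
  · rw [tri_integral w hw]
end

section
/- For all integers 0 ≤ k, l ≤ N−1 with |k−l| < N/2 and all 1 ≤ r ≤ N−1, |(P_{r,N})_{kl} − Π_{r/N}(k,l)| < 2/N, where (P_{r,N})_{kl} = (1/N)∑_{j=0}^{r−1} e^{2πi(l−k)j/N} and Π_{r/N}(k,l) = r/N when k=l and (e^{2πi(l−k)r/N} − 1)/(2πi(l−k)) when k≠l. -/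
open Complex MeasureTheory

section AuxKey
open Complex Real

lemma keyBpos {x : ℝ} (hx0 : 0 < x) (hx : x < Real.pi) :
    ‖1/(Complex.exp (Complex.I * x) - 1) - 1/(Complex.I * x)‖ < 1 := by
  obtain ⟨y, hy, hy0, hy2⟩ : ∃ y, x = 2*y ∧ 0 < y ∧ y < π/2 :=
    ⟨x/2, by ring, by linarith, by linarith⟩
  subst hy
  set s := Real.sin y with hs
  set c := Real.cos y with hc
  have hs0 : 0 < s := Real.sin_pos_of_pos_of_lt_pi hy0 (by linarith [Real.pi_pos])
  have hc0 : 0 < c := Real.cos_pos_of_mem_Ioo ⟨by linarith, hy2⟩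
  have hpyth : (c:ℂ)^2 + (s:ℂ)^2 = 1 := by
    norm_cast
    rw [add_comm]; exact Real.sin_sq_add_cos_sq y
  have hexp : Complex.exp (Complex.I * y) = (c : ℂ) + s * Complex.I := by
    rw [mul_comm, Complex.exp_mul_I, ← Complex.ofReal_cos, ← Complex.ofReal_sin]
  have hslt : s < y := Real.sin_lt hy0
  have hsge : 2/π*y ≤ s := Real.mul_le_sin hy0.le hy2.le
  have hcge : 1 - y^2/2 ≤ c := Real.one_sub_sq_div_two_le_cos
  have htan : y*c < s := by
    have h := Real.lt_tan hy0 hy2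
    rw [Real.tan_eq_sin_div_cos] at h
    exact (lt_div_iff₀ hc0).mp h
  clear_value s c
  have hE : Complex.exp (Complex.I * (2*y:ℝ)) - 1
      = Complex.exp (Complex.I * y) * (2*Complex.I*s) := by
    have h2 : Complex.I * ((2*y:ℝ):ℂ) = Complex.I * y + Complex.I * y := by push_cast; ring
    rw [h2, Complex.exp_add, hexp]
    linear_combination hpyth - (s:ℂ)^2 * Complex.I_sq
  set t := (s - y*c)/(2*y*s) with ht
  have hsC : (s:ℂ) ≠ 0 := by exact_mod_cast hs0.ne'
  have hyC : (y:ℂ) ≠ 0 := by exact_mod_cast hy0.ne'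
  have hden : (2*Complex.I*(s:ℂ)) ≠ 0 :=
    mul_ne_zero (mul_ne_zero two_ne_zero Complex.I_ne_zero) hsC
  have hB : 1/(Complex.exp (Complex.I * (2*y:ℝ)) - 1) - 1/(Complex.I * (2*y:ℝ))
      = ((-1/2 : ℝ) : ℂ) + (t : ℝ) * Complex.I := by
    rw [hE]
    have hinv : (1:ℂ)/(Complex.exp (Complex.I * y) * (2*Complex.I*s))
        = ((c:ℂ) - s * Complex.I)/(2*Complex.I*s) := by
      rw [div_eq_div_iff (mul_ne_zero (Complex.exp_ne_zero _) hden) hden, hexp]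
      linear_combination (-2*Complex.I*(s:ℂ)) * hpyth + 2*Complex.I*(s:ℂ)^3 * Complex.I_sq
    rw [hinv, ht]
    push_cast
    field_simp
    linear_combination (norm := ring_nf) ((c:ℂ)*(y:ℂ) - (s:ℂ)) * Complex.I_sq
  -- bounds on t
  have ht0 : 0 < t := div_pos (by linarith) (by positivity)
  have hsge' : 2*y ≤ π*s := by
    have h := hsge
    rw [div_mul_eq_mul_div, div_le_iff₀ Real.pi_pos] at h
    linarith
  have htub : t ≤ π*y/8 := by
    rw [ht, div_le_iff₀ (by positivity)]
    nlinarith [mul_le_mul_of_nonneg_left hsge' (show (0:ℝ) ≤ y^2/4 by positivity),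
      mul_le_mul_of_nonneg_left hcge hy0.le, hslt, hy0, hs0]
  have htu2 : t ≤ π^2/16 := htub.trans (by nlinarith [Real.pi_pos, hy2])
  rw [hB, Complex.norm_add_mul_I]
  have hpi : π < 3.15 := by linarith [Real.pi_lt_d2]
  have hpi2 : π^2 < 9.9225 := by nlinarith [Real.pi_pos]
  have h1 : (-1/2:ℝ)^2 + t^2 < 1 := by
    nlinarith [mul_le_mul htu2 htu2 ht0.le (by positivity : (0:ℝ) ≤ π^2/16)]
  have := Real.sqrt_lt_sqrt (by positivity) h1
  simpa using this

lemma keyB {x : ℝ} (hx0 : x ≠ 0) (hx : |x| < Real.pi) :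
    ‖1/(Complex.exp (Complex.I * x) - 1) - 1/(Complex.I * x)‖ < 1 := by
  rcases hx0.lt_or_gt with h | h
  · have h1 : 0 < -x := by linarith
    have h2 : -x < π := by rw [abs_of_neg h] at hx; exact hx
    have key := keyBpos h1 h2
    have hconj : (1/(Complex.exp (Complex.I * ((-x:ℝ):ℂ)) - 1) - 1/(Complex.I * ((-x:ℝ):ℂ)))
        = starRingEnd ℂ (1/(Complex.exp (Complex.I * (x:ℝ)) - 1) - 1/(Complex.I * (x:ℝ))) := by
      rw [map_sub, map_div₀, map_div₀, map_one, map_sub, map_one, ← Complex.exp_conj]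
      simp only [map_mul, Complex.conj_I, Complex.conj_ofReal]
      push_cast
      ring_nf
    rw [hconj, Complex.norm_conj] at key
    exact key
  · exact keyBpos h (by rwa [abs_of_pos h] at hx)

end AuxKey

/-- The entries of the projection matrix `P_{r,N}`:
`(P_{r,N})_{kl} = (1/N) ∑_{j=0}^{r-1} e^{2πi (l-k) j / N}`. -/
noncomputable def Pentry (N r : ℕ) (k l : ℕ) : ℂ :=
  (1 / N) * ∑ j ∈ Finset.range r,
    Complex.exp (2 * Real.pi * Complex.I * ((l : ℤ) - (k : ℤ)) * j / N)

/-- The entries of the limiting operator `Π_{r/N}`: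
`Π_{r/N}(k,l) = r/N` if `k = l` and `(e^{2πi(l-k)r/N} - 1)/(2πi(l-k))` otherwise. -/
noncomputable def PiEntry (r N : ℕ) (k l : ℤ) : ℂ :=
  if k = l then (r : ℂ) / N
  else (Complex.exp (2 * Real.pi * Complex.I * ((l : ℂ) - (k : ℂ)) * r / N) - 1) /
    (2 * Real.pi * Complex.I * ((l : ℂ) - (k : ℂ)))

theorem Pentry_close_to_PiEntry (N r : ℕ) (hN : 1 ≤ N) (hr1 : 1 ≤ r) (hr2 : r ≤ N - 1)
    (k l : ℕ) (hk : k ≤ N - 1) (hl : l ≤ N - 1)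
    (hkl : (|(k : ℤ) - (l : ℤ)| : ℝ) < N / 2) :
    ‖Pentry N r k l - PiEntry r N (k : ℤ) (l : ℤ)‖ < 2 / N := by
  have hNR : (0:ℝ) < N := by exact_mod_cast hN
  have hNC : (N:ℂ) ≠ 0 := Nat.cast_ne_zero.mpr (by omega)
  by_cases h : (k:ℤ) = (l:ℤ)
  · simp only [Pentry, PiEntry, if_pos h, h]
    rw [sub_self]
    push_cast
    simp only [zero_mul, mul_zero, zero_div, Complex.exp_zero]
    rw [Finset.sum_const, Finset.card_range, nsmul_eq_mul, mul_one]
    rw [show (1:ℂ)/N * r = (r:ℂ)/N by field_simp]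
    simp only [sub_self, map_zero, norm_zero]
    positivity
  · -- off-diagonal case
    set m : ℤ := (l:ℤ) - (k:ℤ) with hm
    have hm0 : m ≠ 0 := sub_ne_zero.mpr (Ne.symm h)
    have hmabs : |((m:ℝ))| < N/2 := by
      rw [hm]
      push_cast
      push_cast at hkl
      rw [abs_sub_comm]
      exact hkl
    have hm1 : (1:ℝ) ≤ |(m:ℝ)| := by
      rw [← Int.cast_abs]
      exact_mod_cast Int.one_le_abs hm0
    set x : ℝ := 2 * Real.pi * m / N with hx
    have hpi := Real.pi_pos
    have hx0 : x ≠ 0 := by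
      rw [hx]
      intro hz
      rw [div_eq_zero_iff] at hz
      rcases hz with hz | hz
      · rcases mul_eq_zero.mp hz with hz | hz
        · nlinarith
        · exact hm0 (by exact_mod_cast hz)
      · linarith
    have hxabs : |x| < Real.pi := by
      rw [hx, abs_div, abs_mul]
      rw [abs_of_pos (by positivity : (0:ℝ) < 2 * Real.pi), abs_of_pos hNR]
      rw [div_lt_iff₀ hNR]
      nlinarith
    have hxC : ((x:ℝ):ℂ) ≠ 0 := Complex.ofReal_ne_zero.mpr hx0
    have hxval : ((x:ℝ):ℂ) = 2 * (Real.pi:ℂ) * (((l:ℤ):ℂ) - ((k:ℤ):ℂ)) / N := by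
      rw [hx, hm]; push_cast; ring
    set ω : ℂ := Complex.exp (Complex.I * x) with hω
    have hω1 : ω ≠ 1 := by
      rw [hω]
      intro hc
      rw [Complex.exp_eq_one_iff] at hc
      obtain ⟨n, hn⟩ := hc
      have him : x = n * (2 * Real.pi) := by
        have := congrArg Complex.im hn
        simpa using this
      have hmn : (m:ℝ) = (n:ℝ) * N := by
        rw [hx] at him
        rw [div_eq_iff hNR.ne'] at him
        have h2 : 2 * Real.pi * (m:ℝ) = 2 * Real.pi * ((n:ℝ) * N) := by linarith
        exact mul_left_cancel₀ (by positivity) h2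
      have hmnZ : m = n * N := by exact_mod_cast hmn
      rcases eq_or_ne n 0 with hn0 | hn0
      · exact hm0 (by simp [hmnZ, hn0])
      · have hNlem : (N:ℝ) ≤ |(m:ℝ)| := by
          rw [← Int.cast_abs]
          have hZ : (N:ℤ) ≤ |m| := by
            rw [hmnZ, abs_mul]
            calc (N:ℤ) = 1 * N := (one_mul _).symm
            _ ≤ |n| * |(N:ℤ)| := by
                apply mul_le_mul (Int.one_le_abs hn0) (le_abs_self _) (by positivity) (abs_nonneg _)
          exact_mod_cast hZ
        linarith
    have hωs : ω - 1 ≠ 0 := sub_ne_zero.mpr hω1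
    have hsummand : ∀ j : ℕ,
        Complex.exp (2 * Real.pi * Complex.I * (((l:ℤ):ℂ) - ((k:ℤ):ℂ)) * j / N) = ω ^ j := by
      intro j
      rw [hω, ← Complex.exp_nat_mul]
      congr 1
      rw [hxval]
      ring
    have hPe : Pentry N r k l = (1/N) * ((ω^r - 1)/(ω - 1)) := by
      rw [Pentry]
      congr 1
      rw [Finset.sum_congr rfl (fun j _ => hsummand j)]
      exact geom_sum_eq hω1 r
    have hPi : PiEntry r N (k:ℤ) (l:ℤ) = (ω^r - 1) / (Complex.I * x * N) := by
      rw [PiEntry, if_neg h]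
      congr 1
      · congr 1
        rw [hω, ← Complex.exp_nat_mul]
        congr 1
        rw [hxval]
        ring
      · rw [hxval]
        field_simp
    have hdiff : Pentry N r k l - PiEntry r N (k:ℤ) (l:ℤ)
        = (ω^r - 1) / N * (1/(ω - 1) - 1/(Complex.I * x)) := by
      rw [hPe, hPi]
      field_simp
    rw [hdiff, norm_mul, norm_div, Complex.norm_natCast]
    have habs2 : ‖ω^r - 1‖ ≤ 2 := by
      have htri : ‖ω^r - 1‖ ≤ ‖ω^r‖ + ‖(1:ℂ)‖ := by
        exact norm_sub_le (ω^r) (1:ℂ)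
      have habsω : ‖ω^r‖ = 1 := by
        rw [norm_pow, hω, mul_comm, Complex.norm_exp_ofReal_mul_I, one_pow]
      rw [habsω] at htri
      norm_num at htri
      exact htri
    have hBlt := keyB hx0 hxabs
    calc ‖ω ^ r - 1‖ / N * ‖1/(ω - 1) - 1/(Complex.I * x)‖
        < 2 / N * 1 := by
          apply mul_lt_mul' (by gcongr) hBlt (norm_nonneg _) (by positivity)
      _ = 2 / N := mul_one _
end

section
/- Let {α_j}_{j∈ℤ} and {γ_j}_{j∈ℤ} be real, symmetric, nonnegative sequences with α_0 = γ_0 = 1, satisfying 1 = α_0 ≥ α_1 ≥ ⋯ ≥ α_{p−1} ≥ 0, α_j = 0 for j ≥ p, and 1 = γ_0 ≥ γ_1 ≥ ⋯ ≥ γ_{n−1} ≥ 0, γ_j = 0 for j ≥ n. Then ∑_{j∈ℤ} α_j γ_j − (1/3)∑_{j∈ℤ}(α_j γ_j + (1/2)α_j γ_{j+1} + (1/2)α_{j+1}γ_j + α_{j+1}γ_{j+1}) ≤ 1/3. -/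
theorem monotone_sequence_gap_bound (p n : ℕ) (hp : 0 < p) (hn : 0 < n)
    (α γ : ℤ → ℝ)
    (hα0 : α 0 = 1) (hγ0 : γ 0 = 1)
    (hαsymm : ∀ j : ℤ, α (-j) = α j) (hγsymm : ∀ j : ℤ, γ (-j) = γ j)
    (hαnn : ∀ j : ℕ, 0 ≤ α (j : ℤ)) (hγnn : ∀ j : ℕ, 0 ≤ γ (j : ℤ))
    (hαmono : ∀ j : ℕ, α ((j : ℤ) + 1) ≤ α (j : ℤ))
    (hγmono : ∀ j : ℕ, γ ((j : ℤ) + 1) ≤ γ (j : ℤ))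
    (hαzero : ∀ j : ℤ, (p : ℤ) ≤ j → α j = 0)
    (hγzero : ∀ j : ℤ, (n : ℤ) ≤ j → γ j = 0) :
    (∑' j : ℤ, α j * γ j) -
      (1 / 3) * ∑' j : ℤ, (α j * γ j + (1 / 2) * α j * γ (j + 1) +
        (1 / 2) * α (j + 1) * γ j + α (j + 1) * γ (j + 1)) ≤ 1 / 3 := by
  have hp' : (1 : ℤ) ≤ (p : ℤ) := by exact_mod_cast hp
  have hn' : (1 : ℤ) ≤ (n : ℤ) := by exact_mod_cast hn
  set M : ℤ := (p : ℤ) + (n : ℤ) with hM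
  have hαnn' : ∀ j : ℤ, 0 ≤ j → 0 ≤ α j := by
    intro j hj; lift j to ℕ using hj; exact hαnn j
  have hγnn' : ∀ j : ℤ, 0 ≤ j → 0 ≤ γ j := by
    intro j hj; lift j to ℕ using hj; exact hγnn j
  have hαmono' : ∀ j : ℤ, 0 ≤ j → α (j + 1) ≤ α j := by
    intro j hj; lift j to ℕ using hj; exact hαmono j
  have hγmono' : ∀ j : ℤ, 0 ≤ j → γ (j + 1) ≤ γ j := by
    intro j hj; lift j to ℕ using hj; exact hγmono j
  have hαz : ∀ j : ℤ, (p : ℤ) ≤ j ∨ j ≤ -(p : ℤ) → α j = 0 := by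
    intro j hj
    rcases hj with h | h
    · exact hαzero j h
    · rw [← hαsymm j]; exact hαzero _ (by omega)
  -- finite sum for first tsum
  have hs1 : (∑' j : ℤ, α j * γ j) = ∑ j ∈ Finset.Icc (-M) M, α j * γ j := by
    apply tsum_eq_sum
    intro j hj
    rw [Finset.mem_Icc] at hj
    have : α j = 0 := hαz j (by omega)
    rw [this, zero_mul]
  -- finite sum for second tsum
  have hs2 : (∑' j : ℤ, (α j * γ j + (1 / 2) * α j * γ (j + 1) +
        (1 / 2) * α (j + 1) * γ j + α (j + 1) * γ (j + 1)))
      = ∑ j ∈ Finset.Icc (-M - 1) M, (α j * γ j + (1 / 2) * α j * γ (j + 1) +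
        (1 / 2) * α (j + 1) * γ j + α (j + 1) * γ (j + 1)) := by
    apply tsum_eq_sum
    intro j hj
    rw [Finset.mem_Icc] at hj
    have h1 : α j = 0 := hαz j (by omega)
    have h2 : α (j + 1) = 0 := hαz (j + 1) (by omega)
    rw [h1, h2]; ring
  rw [hs1, hs2]
  -- fold the first sum
  have key1 : ∑ j ∈ Finset.Icc (-M) M, α j * γ j
      = 1 + 2 * ∑ j ∈ Finset.Icc 1 M, α j * γ j := by
    have hunion : Finset.Icc (-M) M = Finset.Icc (-M) (-1) ∪ Finset.Icc 0 M := by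
      ext x; simp only [Finset.mem_Icc, Finset.mem_union]; omega
    have hdisj : Disjoint (Finset.Icc (-M) (-1)) (Finset.Icc (0 : ℤ) M) := by
      rw [Finset.disjoint_left]
      intro x hx hx'
      rw [Finset.mem_Icc] at hx hx'; omega
    rw [hunion, Finset.sum_union hdisj]
    have hneg : ∑ j ∈ Finset.Icc (-M) (-1), α j * γ j
        = ∑ j ∈ Finset.Icc 1 M, α j * γ j := by
      refine Finset.sum_nbij' (fun j => -j) (fun j => -j) ?_ ?_ ?_ ?_ ?_
      · intro a ha; simp only [Finset.mem_Icc] at ha ⊢; omega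
      · intro a ha; simp only [Finset.mem_Icc] at ha ⊢; omega
      · intro a _; ring
      · intro a _; ring
      · intro a _; rw [hαsymm, hγsymm]
    have h0 : Finset.Icc (0 : ℤ) M = insert 0 (Finset.Icc 1 M) := by
      ext x; simp only [Finset.mem_Icc, Finset.mem_insert]; omega
    rw [hneg, h0, Finset.sum_insert (by simp), hα0, hγ0]
    ring
  -- fold the second sum
  have key2 : ∑ j ∈ Finset.Icc (-M - 1) M, (α j * γ j + (1 / 2) * α j * γ (j + 1) +
        (1 / 2) * α (j + 1) * γ j + α (j + 1) * γ (j + 1))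
      = 2 * ∑ j ∈ Finset.Icc 0 M, (α j * γ j + (1 / 2) * α j * γ (j + 1) +
        (1 / 2) * α (j + 1) * γ j + α (j + 1) * γ (j + 1)) := by
    have hunion : Finset.Icc (-M - 1) M = Finset.Icc (-M - 1) (-1) ∪ Finset.Icc 0 M := by
      ext x; simp only [Finset.mem_Icc, Finset.mem_union]; omega
    have hdisj : Disjoint (Finset.Icc (-M - 1) (-1)) (Finset.Icc (0 : ℤ) M) := by
      rw [Finset.disjoint_left]
      intro x hx hx'
      rw [Finset.mem_Icc] at hx hx'; omega
    rw [hunion, Finset.sum_union hdisj]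
    have hneg : ∑ j ∈ Finset.Icc (-M - 1) (-1), (α j * γ j + (1 / 2) * α j * γ (j + 1) +
          (1 / 2) * α (j + 1) * γ j + α (j + 1) * γ (j + 1))
        = ∑ j ∈ Finset.Icc 0 M, (α j * γ j + (1 / 2) * α j * γ (j + 1) +
          (1 / 2) * α (j + 1) * γ j + α (j + 1) * γ (j + 1)) := by
      refine Finset.sum_nbij' (fun j => -1 - j) (fun j => -1 - j) ?_ ?_ ?_ ?_ ?_
      · intro a ha; simp only [Finset.mem_Icc] at ha ⊢; omega
      · intro a ha; simp only [Finset.mem_Icc] at ha ⊢; omega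
      · intro a _; ring
      · intro a _; ring
      · intro a _
        have e1 : α a = α (-1 - a + 1) := by
          rw [show (-1 - a + 1 : ℤ) = -a by ring, hαsymm]
        have e2 : γ a = γ (-1 - a + 1) := by
          rw [show (-1 - a + 1 : ℤ) = -a by ring, hγsymm]
        have e3 : α (a + 1) = α (-1 - a) := by
          rw [show (-1 - a : ℤ) = -(a + 1) by ring, hαsymm]
        have e4 : γ (a + 1) = γ (-1 - a) := by
          rw [show (-1 - a : ℤ) = -(a + 1) by ring, hγsymm]
        rw [e1, e2, e3, e4]; ring
    rw [hneg]; ring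
  rw [key1, key2]
  -- split the summand of the folded second sum
  have hsplit : ∑ j ∈ Finset.Icc (0 : ℤ) M, (α j * γ j + (1 / 2) * α j * γ (j + 1) +
        (1 / 2) * α (j + 1) * γ j + α (j + 1) * γ (j + 1))
      = (∑ j ∈ Finset.Icc (0 : ℤ) M, α j * γ j)
        + (∑ j ∈ Finset.Icc (0 : ℤ) M, ((1 / 2) * α j * γ (j + 1) + (1 / 2) * α (j + 1) * γ j))
        + (∑ j ∈ Finset.Icc (0 : ℤ) M, α (j + 1) * γ (j + 1)) := by
    rw [← Finset.sum_add_distrib, ← Finset.sum_add_distrib]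
    exact Finset.sum_congr rfl (fun j _ => by ring)
  rw [hsplit]
  have h0 : Finset.Icc (0 : ℤ) M = insert 0 (Finset.Icc 1 M) := by
    ext x; simp only [Finset.mem_Icc, Finset.mem_insert]; omega
  have hS0 : ∑ j ∈ Finset.Icc (0 : ℤ) M, α j * γ j
      = 1 + ∑ j ∈ Finset.Icc 1 M, α j * γ j := by
    rw [h0, Finset.sum_insert (by simp), hα0, hγ0]; ring
  have hS1 : ∑ j ∈ Finset.Icc (0 : ℤ) M, α (j + 1) * γ (j + 1)
      = ∑ j ∈ Finset.Icc 1 M, α j * γ j := by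
    have hsh : ∑ j ∈ Finset.Icc (0 : ℤ) M, α (j + 1) * γ (j + 1)
        = ∑ j ∈ Finset.Icc 1 (M + 1), α j * γ j := by
      refine Finset.sum_nbij' (fun j => j + 1) (fun j => j - 1) ?_ ?_ ?_ ?_ ?_
      · intro a ha; simp only [Finset.mem_Icc] at ha ⊢; omega
      · intro a ha; simp only [Finset.mem_Icc] at ha ⊢; omega
      · intro a _; ring
      · intro a _; ring
      · intro a _; rfl
    have htop : Finset.Icc (1 : ℤ) (M + 1) = insert (M + 1) (Finset.Icc 1 M) := by
      ext x; simp only [Finset.mem_Icc, Finset.mem_insert]; omega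
    have hz : α (M + 1) = 0 := hαz (M + 1) (by omega)
    rw [hsh, htop, Finset.sum_insert (by rw [Finset.mem_Icc]; omega), hz]
    ring
  rw [hS0, hS1]
  -- the main inequality between sums
  have hbound : ∑ j ∈ Finset.Icc (0 : ℤ) M, α (j + 1) * γ (j + 1)
      ≤ ∑ j ∈ Finset.Icc (0 : ℤ) M, ((1 / 2) * α j * γ (j + 1) + (1 / 2) * α (j + 1) * γ j) := by
    apply Finset.sum_le_sum
    intro j hj
    rw [Finset.mem_Icc] at hj
    have hj0 : (0 : ℤ) ≤ j := hj.1
    have h1 : α (j + 1) * γ (j + 1) ≤ α j * γ (j + 1) :=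
      mul_le_mul_of_nonneg_right (hαmono' j hj0) (hγnn' (j + 1) (by omega))
    have h2 : α (j + 1) * γ (j + 1) ≤ α (j + 1) * γ j :=
      mul_le_mul_of_nonneg_left (hγmono' j hj0) (hαnn' (j + 1) (by omega))
    linarith
  rw [hS1] at hbound
  linarith
end
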